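/- Let C be an open box in ℝ^N (N ≥ 2) and Φ : C → ℝ a continuously differentiable convex function. Then the gradient of Φ is isotone on C if and only if Φ is 2-box monotone, i.e., for every nondegenerate 2-dimensional coordinate-parallel box B contained in C, the second-order increment Δ(Φ; B) = Φ(…,v_i,…,v_j,…) − Φ(…,v_i,…,w_j,…) − Φ(…,w_i,…,v_j,…) + Φ(…,w_i,…,w_j,…) is nonnegative. -/

import Mathlib

open Set Filter Topology

lemma box_line_hasDerivAt {N : ℕ} {C : Set (Fin N → ℝ)} (hO : IsOpen C)
    {Φ : (Fin N → ℝ) → ℝ} (hΦ : ContDiffOn ℝ 1 Φ C) (x e : Fin N → ℝ) (t₀ : ℝ)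
    (h : x + t₀ • e ∈ C) :
    HasDerivAt (fun t => Φ (x + t • e)) (fderiv ℝ Φ (x + t₀ • e) e) t₀ := by
  have hdiff : DifferentiableAt ℝ Φ (x + t₀ • e) :=
    ((hΦ.contDiffAt (hO.mem_nhds h)).differentiableAt one_ne_zero)
  have h1 : HasDerivAt (fun t : ℝ => x + t • e) e t₀ := by
    simpa using ((hasDerivAt_id t₀).smul_const e).const_add x
  exact hdiff.hasFDerivAt.comp_hasDerivAt t₀ h1

lemma update_eq_line {N : ℕ} (u : Fin N → ℝ) (j : Fin N) (t : ℝ) :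
    Function.update u j t = Function.update u j 0 + t • (Pi.single j 1 : Fin N → ℝ) := by
  funext l
  by_cases hl : l = j
  · subst hl; simp
  · simp [Function.update_apply, hl, Pi.single_eq_of_ne hl]

theorem stmt8 (N : ℕ) (hN : 2 ≤ N) (a b : Fin N → ℝ) (C : Set (Fin N → ℝ))
    (hC : C = {x | ∀ k, x k ∈ Set.Ioo (a k) (b k)})
    (Φ : (Fin N → ℝ) → ℝ) (hΦ : ContDiffOn ℝ 1 Φ C) (hconv : ConvexOn ℝ C Φ) :
    (∀ u ∈ C, ∀ v ∈ C, u ≤ v →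
        ∀ k : Fin N, fderiv ℝ Φ u (Pi.single k 1) ≤ fderiv ℝ Φ v (Pi.single k 1)) ↔
      (∀ (u : Fin N → ℝ) (i j : Fin N), i ≠ j →
        ∀ vi wi vj wj : ℝ, vi < wi → vj < wj →
        Function.update (Function.update u i vi) j vj ∈ C →
        Function.update (Function.update u i vi) j wj ∈ C →
        Function.update (Function.update u i wi) j vj ∈ C →
        Function.update (Function.update u i wi) j wj ∈ C →
        0 ≤ Φ (Function.update (Function.update u i vi) j vj)
            - Φ (Function.update (Function.update u i vi) j wj)
            - Φ (Function.update (Function.update u i wi) j vj)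
            + Φ (Function.update (Function.update u i wi) j wj)) := by
  have hO : IsOpen C := by
    have : C = Set.pi Set.univ (fun k => Ioo (a k) (b k)) := by
      rw [hC]; ext x; simp [Set.mem_pi]
    rw [this]
    exact isOpen_set_pi Set.finite_univ (fun k _ => isOpen_Ioo)
  have hmem : ∀ x, x ∈ C ↔ ∀ k, a k < x k ∧ x k < b k := by
    intro x; rw [hC]; simp [Set.mem_setOf_eq, Set.mem_Ioo]
  -- generic membership lemma for points on a coordinate line
  have memline : ∀ (j : Fin N) (z : Fin N → ℝ) (s s' t : ℝ),
      z + s • (Pi.single j 1 : Fin N → ℝ) ∈ C → z + s' • (Pi.single j 1 : Fin N → ℝ) ∈ C →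
      t ∈ Icc s s' → z + t • (Pi.single j 1 : Fin N → ℝ) ∈ C := by
    intro j z s s' t hs hs' ht
    rw [hmem] at hs hs' ⊢
    intro l
    have h0 := hs l
    have h1 := hs' l
    by_cases hl : l = j
    · subst hl
      simp only [Pi.add_apply, Pi.smul_apply, Pi.single_eq_same, smul_eq_mul, mul_one] at *
      constructor
      · linarith [ht.1]
      · linarith [ht.2]
    · simp only [Pi.add_apply, Pi.smul_apply, Pi.single_eq_of_ne hl, smul_eq_mul,
        mul_zero, add_zero] at *
      exact h0
  constructor
  · -- gradient isotone → 2-box monotone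
    intro H u i j hij vi wi vj wj hviwi hvjwj h00 h01 h10 h11
    have E1 := update_eq_line (Function.update u i vi) j
    have E2 := update_eq_line (Function.update u i wi) j
    rw [E1 vj] at h00
    rw [E1 wj] at h01
    rw [E2 vj] at h10
    rw [E2 wj] at h11
    rw [E1 vj, E1 wj, E2 vj, E2 wj]
    set e : Fin N → ℝ := Pi.single j 1 with he
    set X : Fin N → ℝ := Function.update (Function.update u i vi) j 0 with hX
    set Y : Fin N → ℝ := Function.update (Function.update u i wi) j 0 with hY
    have hXmem : ∀ t ∈ Icc vj wj, X + t • e ∈ C := fun t ht =>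
      memline j X vj wj t h00 h01 ht
    have hYmem : ∀ t ∈ Icc vj wj, Y + t • e ∈ C := fun t ht =>
      memline j Y vj wj t h10 h11 ht
    have hXY : ∀ t : ℝ, X + t • e ≤ Y + t • e := by
      intro t l
      simp only [Pi.add_apply]
      have hXl : X l ≤ Y l := by
        rw [hX, hY]
        by_cases hl : l = j
        · subst hl; simp
        · by_cases hli : l = i
          · subst hli
            simp [Function.update_apply, hl, hij]
            exact hviwi.le
          · simp [Function.update_apply, hl, hli]
      exact add_le_add hXl le_rfl
    set g : ℝ → ℝ := fun t => Φ (Y + t • e) - Φ (X + t • e) with hg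
    have hgd : ∀ t ∈ Icc vj wj,
        HasDerivAt g (fderiv ℝ Φ (Y + t • e) e - fderiv ℝ Φ (X + t • e) e) t := by
      intro t ht
      exact (box_line_hasDerivAt hO hΦ Y e t (hYmem t ht)).sub
        (box_line_hasDerivAt hO hΦ X e t (hXmem t ht))
    have hmono : MonotoneOn g (Icc vj wj) := by
      apply monotoneOn_of_deriv_nonneg (convex_Icc vj wj)
      · exact fun t ht => ((hgd t ht).continuousAt).continuousWithinAt
      · intro t ht
        rw [interior_Icc] at ht
        exact ((hgd t (Ioo_subset_Icc_self ht)).differentiableAt).differentiableWithinAt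
      · intro t ht
        rw [interior_Icc] at ht
        have ht' : t ∈ Icc vj wj := Ioo_subset_Icc_self ht
        rw [(hgd t ht').deriv]
        have := H (X + t • e) (hXmem t ht') (Y + t • e) (hYmem t ht') (hXY t) j
        rw [← he] at this
        linarith
    have hfin := hmono (left_mem_Icc.mpr hvjwj.le) (right_mem_Icc.mpr hvjwj.le) hvjwj.le
    simp only [hg] at hfin
    linarith
  · -- 2-box monotone → gradient isotone
    intro H2 u hu v hv huv k
    -- Step: monotonicity of ∂ₖΦ under an increase of a single coordinate m
    have step : ∀ m : Fin N, ∀ x, x ∈ C → ∀ y, y ∈ C → x ≤ y → (∀ l, l ≠ m → x l = y l) →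
        fderiv ℝ Φ x (Pi.single k 1) ≤ fderiv ℝ Φ y (Pi.single k 1) := by
      intro m x hx y hy hxy hagree
      rcases eq_or_lt_of_le (hxy m) with heq | hlt
      · have hxyeq : x = y := funext fun l => by
          by_cases hl : l = m
          · subst hl; exact heq
          · exact hagree l hl
        rw [hxyeq]
      · by_cases hmk : m = k
        · -- moving along coordinate k itself: convexity
          subst hmk
          set e : Fin N → ℝ := Pi.single m 1 with he
          set c : ℝ := y m - x m with hc
          have hcpos : 0 < c := sub_pos.mpr hlt
          have hyx : y = x + c • e := by
            funext l
            by_cases hl : l = m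
            · subst hl
              simp only [Pi.add_apply, Pi.smul_apply, he, Pi.single_eq_same, smul_eq_mul,
                mul_one, hc]
              ring
            · simp only [Pi.add_apply, Pi.smul_apply, he, Pi.single_eq_of_ne hl, smul_eq_mul,
                mul_zero, add_zero]
              exact (hagree l hl).symm
          have hx0 : x + (0:ℝ) • e = x := by simp
          have hsegmem : ∀ t ∈ Icc (0:ℝ) c, x + t • e ∈ C := by
            intro t ht
            refine memline m x 0 c t ?_ ?_ ht
            · rw [hx0]; exact hx
            · rw [← hyx]; exact hy
          have hψconv : ConvexOn ℝ (Icc (0:ℝ) c) (fun t => Φ (x + t • e)) := by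
            refine ⟨convex_Icc _ _, ?_⟩
            intro t1 ht1 t2 ht2 α β hα hβ hαβ
            have hcomb : α • (x + t1 • e) + β • (x + t2 • e)
                = x + (α * t1 + β * t2) • e := by
              funext l
              simp only [Pi.add_apply, Pi.smul_apply, smul_eq_mul]
              linear_combination (x l) * hαβ
            have := hconv.2 (hsegmem t1 ht1) (hsegmem t2 ht2) hα hβ hαβ
            rw [hcomb] at this
            simpa using this
          have hψ0 : HasDerivAt (fun t : ℝ => Φ (x + t • e)) (fderiv ℝ Φ x e) (0:ℝ) := by
            have := box_line_hasDerivAt hO hΦ x e 0 (by rw [hx0]; exact hx)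
            rwa [hx0] at this
          have hψc : HasDerivAt (fun t : ℝ => Φ (x + t • e)) (fderiv ℝ Φ y e) c := by
            have := box_line_hasDerivAt hO hΦ x e c (by rw [← hyx]; exact hy)
            rwa [← hyx] at this
          have h1 := hψconv.le_slope_of_hasDerivAt (left_mem_Icc.mpr hcpos.le)
            (right_mem_Icc.mpr hcpos.le) hcpos hψ0
          have h2 := hψconv.slope_le_of_hasDerivAt (left_mem_Icc.mpr hcpos.le)
            (right_mem_Icc.mpr hcpos.le) hcpos hψc
          exact h1.trans h2
        · -- moving along a different coordinate m ≠ k: 2-box monotonicity + limit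
          have hkm : k ≠ m := fun h => hmk h.symm
          set e : Fin N → ℝ := Pi.single k 1 with he
          have hxk : x k = y k := hagree k hkm
          set δ : ℝ := b k - x k with hδdef
          have hδ : 0 < δ := sub_pos.mpr ((hmem x).mp hx k).2
          have hlinemem : ∀ h ∈ Ioo (0:ℝ) δ, x + h • e ∈ C ∧ y + h • e ∈ C := by
            intro h hh
            constructor
            · rw [hmem]; intro l
              have h0 := (hmem x).mp hx l
              by_cases hl : l = k
              · subst hl
                simp only [Pi.add_apply, Pi.smul_apply, he, Pi.single_eq_same, smul_eq_mul,
                  mul_one]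
                constructor
                · linarith [h0.1, hh.1]
                · have : h < δ := hh.2
                  rw [hδdef] at this
                  linarith
              · simp only [Pi.add_apply, Pi.smul_apply, he, Pi.single_eq_of_ne hl, smul_eq_mul,
                  mul_zero, add_zero]
                exact h0
            · rw [hmem]; intro l
              have h0 := (hmem y).mp hy l
              by_cases hl : l = k
              · subst hl
                simp only [Pi.add_apply, Pi.smul_apply, he, Pi.single_eq_same, smul_eq_mul,
                  mul_one]
                constructor
                · linarith [h0.1, hh.1]
                · have : h < δ := hh.2
                  rw [hδdef] at this
                  rw [← hxk]
                  linarith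
              · simp only [Pi.add_apply, Pi.smul_apply, he, Pi.single_eq_of_ne hl, smul_eq_mul,
                  mul_zero, add_zero]
                exact h0
          have key : ∀ h ∈ Ioo (0:ℝ) δ, Φ (x + h • e) - Φ x ≤ Φ (y + h • e) - Φ y := by
            intro h hh
            have P1 : Function.update (Function.update x k (x k)) m (x m) = x := by
              simp
            have P2 : Function.update (Function.update x k (x k)) m (y m) = y := by
              funext l
              by_cases hl : l = m
              · subst hl; simp
              · simp only [Function.update_apply, hl, if_false]
                by_cases hlk : l = k
                · subst hlk; simp [hagree l hl]
                · simp [hlk, hagree l hl]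
            have P3 : Function.update (Function.update x k (x k + h)) m (x m)
                = x + h • e := by
              funext l
              by_cases hl : l = m
              · subst hl
                simp [Function.update_apply, he, Pi.single_eq_of_ne hmk]
              · by_cases hlk : l = k
                · subst hlk
                  simp [Function.update_apply, hl, he]
                · simp [Function.update_apply, hl, hlk, he, Pi.single_eq_of_ne hlk]
            have P4 : Function.update (Function.update x k (x k + h)) m (y m)
                = y + h • e := by
              funext l
              by_cases hl : l = m
              · subst hl
                simp [Function.update_apply, he, Pi.single_eq_of_ne hmk, hagree]
              · by_cases hlk : l = k
                · subst hlk
                  simp [Function.update_apply, hl, he, hxk]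
                · simp [Function.update_apply, hl, hlk, he, Pi.single_eq_of_ne hlk,
                    hagree l hl]
            have hineq := H2 x k m hkm (x k) (x k + h) (x m) (y m)
              (by linarith [hh.1]) hlt
              (by rw [P1]; exact hx) (by rw [P2]; exact hy)
              (by rw [P3]; exact (hlinemem h hh).1) (by rw [P4]; exact (hlinemem h hh).2)
            rw [P1, P2, P3, P4] at hineq
            linarith
          have hdx : HasDerivAt (fun t : ℝ => Φ (x + t • e)) (fderiv ℝ Φ x (Pi.single k 1)) (0:ℝ) := by
            have h0 : x + (0:ℝ) • e = x := by simp
            have := box_line_hasDerivAt hO hΦ x e 0 (by rw [h0]; exact hx)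
            rwa [h0] at this
          have hdy : HasDerivAt (fun t : ℝ => Φ (y + t • e)) (fderiv ℝ Φ y (Pi.single k 1)) (0:ℝ) := by
            have h0 : y + (0:ℝ) • e = y := by simp
            have := box_line_hasDerivAt hO hΦ y e 0 (by rw [h0]; exact hy)
            rwa [h0] at this
          have tx : Tendsto (slope (fun t : ℝ => Φ (x + t • e)) 0) (𝓝[>] (0:ℝ))
              (𝓝 (fderiv ℝ Φ x (Pi.single k 1))) :=
            (hasDerivAt_iff_tendsto_slope.mp hdx).mono_left
              (nhdsWithin_mono 0 fun h hh => Set.mem_compl_singleton_iff.mpr (ne_of_gt hh))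
          have ty : Tendsto (slope (fun t : ℝ => Φ (y + t • e)) 0) (𝓝[>] (0:ℝ))
              (𝓝 (fderiv ℝ Φ y (Pi.single k 1))) :=
            (hasDerivAt_iff_tendsto_slope.mp hdy).mono_left
              (nhdsWithin_mono 0 fun h hh => Set.mem_compl_singleton_iff.mpr (ne_of_gt hh))
          refine le_of_tendsto_of_tendsto tx ty ?_
          filter_upwards [Ioo_mem_nhdsGT_of_mem (Set.mem_Ico.mpr ⟨le_rfl, hδ⟩)] with h hh
          have hkey := key h hh
          rw [slope_def_field, slope_def_field, sub_zero]
          have h0x : x + (0:ℝ) • e = x := by simp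
          have h0y : y + (0:ℝ) • e = y := by simp
          rw [h0x, h0y]
          exact (div_le_div_iff_of_pos_right hh.1).mpr hkey
    -- chain the single-coordinate steps
    have chain : ∀ m : ℕ,
        fderiv ℝ Φ u (Pi.single k 1)
          ≤ fderiv ℝ Φ (fun l : Fin N => if (l : ℕ) < m then v l else u l) (Pi.single k 1) := by
      intro m
      induction m with
      | zero =>
        have : (fun l : Fin N => if (l : ℕ) < 0 then v l else u l) = u := by
          funext l; simp
        rw [this]
      | succ m ih =>
        by_cases hm : m < N
        · refine ih.trans (step ⟨m, hm⟩ _ ?_ _ ?_ ?_ ?_)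
          · rw [hmem]; intro l
            by_cases hl : (l : ℕ) < m
            · simpa [hl] using (hmem v).mp hv l
            · simpa [hl] using (hmem u).mp hu l
          · rw [hmem]; intro l
            by_cases hl : (l : ℕ) < m + 1
            · simpa [hl] using (hmem v).mp hv l
            · simpa [hl] using (hmem u).mp hu l
          · intro l
            by_cases hl : (l : ℕ) < m
            · simp only [hl, if_pos, show (l : ℕ) < m + 1 by omega, if_pos]
              exact le_rfl
            · by_cases hl1 : (l : ℕ) < m + 1
              · simp only [hl, if_neg, hl1, if_pos, if_false]
                exact huv l
              · simp only [hl, hl1, if_neg, if_false]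
                exact le_rfl
          · intro l hl
            have hne : (l : ℕ) ≠ m := by
              simpa [Fin.ext_iff] using hl
            have : ((l : ℕ) < m) = ((l : ℕ) < m + 1) := by
              rw [eq_iff_iff]; omega
            simp only [this]
        · have hNm : (fun l : Fin N => if (l : ℕ) < m + 1 then v l else u l)
              = (fun l : Fin N => if (l : ℕ) < m then v l else u l) := by
            funext l
            have := l.isLt
            rw [if_pos (by omega), if_pos (by omega)]
          rw [hNm]
          exact ih
    have hzN : (fun l : Fin N => if (l : ℕ) < N then v l else u l) = v :=
      funext fun l => if_pos l.isLt
    have := chain N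
    rwa [hzN] at this
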